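/- Let (X, α) be a partial dynamical system with α injective. Then the projection Φ : X̃ → X, Φ(x₀, x₁, ...) = x₀, is a homeomorphism if and only if the image Δ₋₁ = α(Δ₁) is open in X. -/

import Mathlib

open Set

variable {X : Type*}

/-- `pdsDom α Δ n` is the domain `Δₙ` of the `n`-th iterate of the
partial map `α : Δ → X`. -/
def pdsDom (α : X → X) (Δ : Set X) : ℕ → Set X
  | 0 => Set.univ
  | n + 1 => Δ ∩ α ⁻¹' pdsDom α Δ n

/-- The point `0` adjoined to `X`: we realize `X ∪ {0}` as `X ⊕ Unit`,
with `0 := Sum.inr ()`. -/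
abbrev pdsZero (X : Type*) : X ⊕ Unit := Sum.inr ()

/-- The set `X_∞` of infinite anti-orbits of `(X, α)`, inside the
product `∏_{n ∈ ℕ} (X ∪ {0})`. -/
def XInf (α : X → X) (Δ : Set X) : Set (ℕ → X ⊕ Unit) :=
  {p | (∀ n, ∃ x, p n = Sum.inl x ∧ x ∈ pdsDom α Δ n) ∧
       (∀ n x, p (n + 1) = Sum.inl x → x ∈ Δ ∧ p n = Sum.inl (α x))}

/-- The set `X_N` of anti-orbits of length exactly `N`: sequences
`(x₀, …, x_N, 0, 0, …)` with `xₙ ∈ Δₙ`, `α xₙ = x_{n-1}` and `x_N ∉ α(Δ)`. -/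
def XN (α : X → X) (Δ : Set X) (N : ℕ) : Set (ℕ → X ⊕ Unit) :=
  {p | (∀ n ≤ N, ∃ x, p n = Sum.inl x ∧ x ∈ pdsDom α Δ n) ∧
       (∀ n, N < n → p n = pdsZero X) ∧
       (∀ n x, p (n + 1) = Sum.inl x → x ∈ Δ ∧ p n = Sum.inl (α x)) ∧
       (∀ x, p N = Sum.inl x → x ∉ α '' Δ)}

/-- The `α`-extension `X̃ = ⋃_N X_N ∪ X_∞` of `X`. -/
def Xtilde (α : X → X) (Δ : Set X) : Set (ℕ → X ⊕ Unit) :=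
  (⋃ N, XN α Δ N) ∪ XInf α Δ

/-- The map `α̃ : (x₀, x₁, …) ↦ (α x₀, x₀, x₁, …)` on sequences. -/
def tShift (α : X → X) : (ℕ → X ⊕ Unit) → (ℕ → X ⊕ Unit) :=
  fun p n => Nat.casesOn n (Sum.map α id (p 0)) fun k => p k

/-- The backwards shift `(x₀, x₁, x₂, …) ↦ (x₁, x₂, …)`. -/
def bShift : (ℕ → X ⊕ Unit) → (ℕ → X ⊕ Unit) := fun p n => p (n + 1)

/-- The domain `Δ̃₁ = {x̃ ∈ X̃ : x₀ ∈ Δ₁}` of `α̃`. -/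
def tDelta1 (α : X → X) (Δ : Set X) : Set (ℕ → X ⊕ Unit) :=
  {p | p ∈ Xtilde α Δ ∧ ∃ x ∈ Δ, p 0 = Sum.inl x}

/-- The image `Δ̃₋₁ = {x̃ ∈ X̃ : x₁ ≠ 0}` of `α̃`. -/
def tDeltaM1 (α : X → X) (Δ : Set X) : Set (ℕ → X ⊕ Unit) :=
  {p | p ∈ Xtilde α Δ ∧ p 1 ≠ pdsZero X}

/-- `V` is invariant under the partial map `α : Δ → X`:
`αⁿ(V ∩ Δₙ) = V ∩ Δ₋ₙ` for all `n ∈ ℕ`. -/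
def PdsInvariant (α : X → X) (Δ : Set X) (V : Set X) : Prop :=
  ∀ n : ℕ, α^[n] '' (V ∩ pdsDom α Δ n) = V ∩ α^[n] '' pdsDom α Δ n

/-- The set `Fₙ = {x ∈ Δₙ : αⁿ x = x}` of `n`-periodic points. -/
def pdsFix (α : X → X) (Δ : Set X) (n : ℕ) : Set X :=
  {x | x ∈ pdsDom α Δ n ∧ α^[n] x = x}

/-- Topological freedom of the partial map `α : Δ → X`: for every `n > 0`,
every nonempty relatively open subset of `Fₙ` contains a point `x` with
`|α⁻ᵏ(x)| > 1` for some `1 ≤ k ≤ n`. -/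
def TopFree [TopologicalSpace X] (α : X → X) (Δ : Set X) : Prop :=
  ∀ n : ℕ, 0 < n → ∀ W : Set X, IsOpen W → (W ∩ pdsFix α Δ n).Nonempty →
    ∃ x ∈ W ∩ pdsFix α Δ n, ∃ k, 1 ≤ k ∧ k ≤ n ∧
      ∃ y z, y ∈ pdsDom α Δ k ∧ z ∈ pdsDom α Δ k ∧
        α^[k] y = x ∧ α^[k] z = x ∧ y ≠ z

lemma mem_Xtilde_iff {α : X → X} {Δ : Set X} {p : ℕ → X ⊕ Unit} :
    p ∈ Xtilde α Δ ↔
      (∃ x, p 0 = Sum.inl x) ∧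
      (∀ n x, p (n + 1) = Sum.inl x → x ∈ Δ ∧ p n = Sum.inl (α x)) ∧
      (∀ n x, p n = Sum.inl x → p (n + 1) = pdsZero X → x ∉ α '' Δ) := by
  constructor
  · rintro (hmem | hmem)
    · rw [mem_iUnion] at hmem
      obtain ⟨N, h1, h2, h3, h4⟩ := hmem
      refine ⟨?_, h3, ?_⟩
      · obtain ⟨x, hx, -⟩ := h1 0 (Nat.zero_le N); exact ⟨x, hx⟩
      · intro n x hx h0 hmem'
        rcases lt_trichotomy n N with hn | rfl | hn
        · obtain ⟨y, hy, -⟩ := h1 (n + 1) hn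
          rw [hy] at h0; exact Sum.inl_ne_inr h0
        · exact h4 x hx hmem'
        · rw [h2 n hn] at hx; exact Sum.inr_ne_inl hx
    · obtain ⟨h1, h2⟩ := hmem
      refine ⟨?_, h2, ?_⟩
      · obtain ⟨x, hx, -⟩ := h1 0; exact ⟨x, hx⟩
      · intro n x hx h0 hmem'
        obtain ⟨y, hy, -⟩ := h1 (n + 1)
        rw [hy] at h0; exact Sum.inl_ne_inr h0
  · rintro ⟨⟨x0, hx0⟩, hC1, hC2⟩
    classical
    have hdom : ∀ n x, p n = Sum.inl x → x ∈ pdsDom α Δ n := by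
      intro n
      induction n with
      | zero => intro x _; trivial
      | succ n ih =>
        intro x hx
        obtain ⟨hxΔ, hpn⟩ := hC1 n x hx
        exact ⟨hxΔ, ih (α x) hpn⟩
    by_cases hinf : ∀ n, ∃ x, p n = Sum.inl x
    · right
      exact ⟨fun n => (hinf n).imp (fun x hx => ⟨hx, hdom n x hx⟩), hC1⟩
    · left
      push_neg at hinf
      obtain ⟨m, hm⟩ := hinf
      have hpm : p m = pdsZero X := by
        cases hq : p m with
        | inl x => exact absurd hq (hm x)
        | inr u => cases u; rfl
      have hex : ∃ k, p k = pdsZero X := ⟨m, hpm⟩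
      set m0 := Nat.find hex with hm0
      have hspec : p m0 = pdsZero X := Nat.find_spec hex
      have hmin : ∀ k < m0, p k ≠ pdsZero X := fun k hk => Nat.find_min hex hk
      have hm0pos : 0 < m0 := by
        rcases Nat.eq_zero_or_pos m0 with h | h
        · rw [h, hx0] at hspec; exact absurd hspec (Sum.inl_ne_inr)
        · exact h
      have hzero : ∀ k, p (m0 + k) = pdsZero X := by
        intro k
        induction k with
        | zero => exact hspec
        | succ k ih =>
          cases hq : p (m0 + k + 1) with
          | inl x =>
            obtain ⟨-, hpk⟩ := hC1 (m0 + k) x hq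
            rw [ih] at hpk; exact absurd hpk (Sum.inr_ne_inl)
          | inr u => cases u; rfl
      rw [mem_iUnion]
      refine ⟨m0 - 1, ?_, ?_, hC1, ?_⟩
      · intro n hn
        have hn' : n < m0 := by omega
        cases hq : p n with
        | inl x => exact ⟨x, rfl, hdom n x hq⟩
        | inr u => cases u; exact absurd hq (hmin n hn')
      · intro n hn
        have : n = m0 + (n - m0) := by omega
        rw [this]; exact hzero _
      · intro x hx hmem'
        have h1 : p (m0 - 1 + 1) = pdsZero X := by
          have : m0 - 1 + 1 = m0 := by omega
          rw [this]; exact hspec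
        exact hC2 (m0 - 1) x hx h1 hmem'

lemma pdsZero_singleton_eq : ({pdsZero X} : Set (X ⊕ Unit)) = Set.range Sum.inr := by
  ext b
  constructor
  · rintro rfl; exact ⟨(), rfl⟩
  · rintro ⟨u, rfl⟩; cases u; rfl

lemma isClosed_Xtilde [TopologicalSpace X] [CompactSpace X] [T2Space X]
    {Δ : Set X} (hΔc : IsClosed Δ) {α : X → X} (hα : ContinuousOn α Δ)
    (hopen : IsOpen (α '' Δ)) : IsClosed (Xtilde α Δ) := by
  set G : Set ((X ⊕ Unit) × (X ⊕ Unit)) :=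
    {q | ∀ x, q.2 = Sum.inl x → x ∈ Δ ∧ q.1 = Sum.inl (α x)} with hGdef
  set H : Set ((X ⊕ Unit) × (X ⊕ Unit)) :=
    {q | ∀ x, q.1 = Sum.inl x → q.2 = pdsZero X → x ∉ α '' Δ} with hHdef
  have hG : IsClosed G := by
    have hGeq : G =
        ((fun x : X => ((Sum.inl (α x) : X ⊕ Unit), (Sum.inl x : X ⊕ Unit))) '' Δ) ∪
        (Set.univ ×ˢ {pdsZero X}) := by
      ext ⟨a, b⟩
      simp only [hGdef, mem_setOf_eq, mem_union, mem_image, mem_prod, mem_univ, true_and,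
        mem_singleton_iff, Prod.mk.injEq]
      constructor
      · intro h
        cases hb : b with
        | inl x =>
          obtain ⟨hxΔ, ha⟩ := h x hb
          exact Or.inl ⟨x, hxΔ, ha.symm, rfl⟩
        | inr u => cases u; exact Or.inr rfl
      · rintro (⟨x, hxΔ, ha, hb⟩ | hb) y hy
        · rw [← hb] at hy
          obtain rfl : y = x := (Sum.inl.inj hy).symm
          exact ⟨hxΔ, ha.symm⟩
        · rw [hb] at hy; exact absurd hy Sum.inr_ne_inl
    rw [hGeq]
    refine IsClosed.union ?_ (isClosed_univ.prod isClosed_singleton)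
    refine IsCompact.isClosed (hΔc.isCompact.image_of_continuousOn ?_)
    exact (continuous_inl.comp_continuousOn hα).prodMk continuous_inl.continuousOn
  have hH : IsClosed H := by
    rw [← isOpen_compl_iff]
    have hHc : Hᶜ = (Sum.inl '' (α '' Δ)) ×ˢ ({pdsZero X} : Set (X ⊕ Unit)) := by
      ext ⟨a, b⟩
      simp only [hHdef, mem_compl_iff, mem_setOf_eq, mem_prod, mem_image,
        mem_singleton_iff, not_forall]
      constructor
      · rintro ⟨x, hx, hb, hmem⟩
        rw [not_not] at hmem
        exact ⟨⟨x, hmem, hx.symm⟩, hb⟩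
      · rintro ⟨⟨x, hmem, hx⟩, hb⟩
        exact ⟨x, hx.symm, hb, not_not_intro hmem⟩
    rw [hHc]
    exact IsOpen.prod (Topology.IsOpenEmbedding.inl.isOpenMap _ hopen)
      (pdsZero_singleton_eq ▸ isOpen_range_inr)
  have heq : Xtilde α Δ =
      ((fun p : ℕ → X ⊕ Unit => p 0) ⁻¹' Set.range Sum.inl) ∩
      ((⋂ n : ℕ, (fun p : ℕ → X ⊕ Unit => (p n, p (n + 1))) ⁻¹' G) ∩
       (⋂ n : ℕ, (fun p : ℕ → X ⊕ Unit => (p n, p (n + 1))) ⁻¹' H)) := by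
    ext p
    rw [mem_Xtilde_iff]
    simp only [mem_inter_iff, mem_preimage, mem_iInter, mem_range, hGdef, hHdef, mem_setOf_eq]
    constructor
    · rintro ⟨⟨x, hx⟩, h1, h2⟩
      exact ⟨⟨x, hx.symm⟩, fun n x => h1 n x, fun n x => h2 n x⟩
    · rintro ⟨⟨x, hx⟩, h1, h2⟩
      exact ⟨⟨x, hx.symm⟩, fun n x => h1 n x, fun n x => h2 n x⟩
  rw [heq]
  have hcont : ∀ n : ℕ, Continuous (fun p : ℕ → X ⊕ Unit => (p n, p (n + 1))) :=
    fun n => (continuous_apply n).prodMk (continuous_apply (n + 1))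
  exact (isClosed_range_inl.preimage (continuous_apply 0)).inter
    ((isClosed_iInter fun n => hG.preimage (hcont n)).inter
     (isClosed_iInter fun n => hH.preimage (hcont n)))

open Classical in
noncomputable def antiOrbitStep (α : X → X) (Δ : Set X) : X ⊕ Unit → X ⊕ Unit
  | Sum.inl y => if h : ∃ z, z ∈ Δ ∧ α z = y then Sum.inl h.choose else pdsZero X
  | Sum.inr _ => pdsZero X

noncomputable def antiOrbit (α : X → X) (Δ : Set X) (x : X) : ℕ → X ⊕ Unit
  | 0 => Sum.inl x
  | n + 1 => antiOrbitStep α Δ (antiOrbit α Δ x n)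

lemma antiOrbit_zero (α : X → X) (Δ : Set X) (x : X) :
    antiOrbit α Δ x 0 = Sum.inl x := rfl

lemma antiOrbit_succ (α : X → X) (Δ : Set X) (x : X) (n : ℕ) :
    antiOrbit α Δ x (n + 1) = antiOrbitStep α Δ (antiOrbit α Δ x n) := rfl

lemma antiOrbit_mem (α : X → X) (Δ : Set X) (x : X) : antiOrbit α Δ x ∈ Xtilde α Δ := by
  classical
  rw [mem_Xtilde_iff]
  refine ⟨⟨x, rfl⟩, ?_, ?_⟩
  · intro n z hz
    rw [antiOrbit_succ] at hz
    cases hy : antiOrbit α Δ x n with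
    | inl y =>
      rw [hy] at hz
      rw [antiOrbitStep] at hz
      split_ifs at hz with h
      obtain ⟨h1, h2⟩ := h.choose_spec
      obtain rfl : z = h.choose := (Sum.inl.inj hz).symm
      exact ⟨h1, by rw [h2]⟩
    | inr u =>
      rw [hy] at hz
      rw [antiOrbitStep] at hz; exact absurd hz Sum.inr_ne_inl
  · intro n y hy h0 hmem
    rw [antiOrbit_succ, hy, antiOrbitStep] at h0
    rw [mem_image] at hmem
    split_ifs at h0


/-- For an injective partial map `α`, the projection `Φ : X̃ → X` onto the
zeroth coordinate is a homeomorphism iff the image `α(Δ)` is open. -/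
theorem Phi_isHomeomorph_iff {X : Type*} [TopologicalSpace X] [CompactSpace X]
    [T2Space X] [Nonempty X] (Δ : Set X) (hΔ : IsClopen Δ) (α : X → X)
    (hα : ContinuousOn α Δ) (hinj : Set.InjOn α Δ) :
    IsHomeomorph (fun p : Xtilde α Δ =>
        Sum.elim id (fun _ => Classical.arbitrary X) ((p : ℕ → X ⊕ Unit) 0)) ↔
      IsOpen (α '' Δ) := by
  classical
  set Φ : Xtilde α Δ → X := fun p =>
      Sum.elim id (fun _ => Classical.arbitrary X) ((p : ℕ → X ⊕ Unit) 0) with hΦdef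
  have hΦval : ∀ (p : Xtilde α Δ) (x : X), (p : ℕ → X ⊕ Unit) 0 = Sum.inl x → Φ p = x := by
    intro p x hx
    simp only [hΦdef]
    rw [hx]
    rfl
  have hcont : Continuous Φ :=
    (continuous_id.sumElim continuous_const).comp
      ((continuous_apply 0).comp continuous_subtype_val)
  have hsurj : Function.Surjective Φ := by
    intro x
    exact ⟨⟨antiOrbit α Δ x, antiOrbit_mem α Δ x⟩, hΦval _ x rfl⟩
  have hinjΦ : Function.Injective Φ := by
    intro p q hpq
    obtain ⟨⟨xp, hxp⟩, hC1p, hC2p⟩ := mem_Xtilde_iff.mp p.2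
    obtain ⟨⟨xq, hxq⟩, hC1q, hC2q⟩ := mem_Xtilde_iff.mp q.2
    have h0 : (p : ℕ → X ⊕ Unit) 0 = (q : ℕ → X ⊕ Unit) 0 := by
      rw [hΦval p xp hxp, hΦval q xq hxq] at hpq
      rw [hxp, hxq, hpq]
    have key : ∀ n, (p : ℕ → X ⊕ Unit) n = (q : ℕ → X ⊕ Unit) n := by
      intro n
      induction n with
      | zero => exact h0
      | succ n ih =>
        cases hp1 : (p : ℕ → X ⊕ Unit) (n + 1) with
        | inl a =>
          obtain ⟨haΔ, hpn⟩ := hC1p n a hp1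
          cases hq1 : (q : ℕ → X ⊕ Unit) (n + 1) with
          | inl b =>
            obtain ⟨hbΔ, hqn⟩ := hC1q n b hq1
            have hab : Sum.inl (α a) = (Sum.inl (α b) : X ⊕ Unit) := by
              rw [← hpn, ih, hqn]
            have : a = b := hinj haΔ hbΔ (Sum.inl.inj hab)
            rw [this]
          | inr u =>
            cases u
            have hq0 : (q : ℕ → X ⊕ Unit) n = Sum.inl (α a) := by rw [← ih]; exact hpn
            exact absurd (mem_image_of_mem α haΔ) (hC2q n (α a) hq0 hq1)
        | inr u =>
          cases hq1 : (q : ℕ → X ⊕ Unit) (n + 1) with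
          | inl b =>
            cases u
            obtain ⟨hbΔ, hqn⟩ := hC1q n b hq1
            have hp0 : (p : ℕ → X ⊕ Unit) n = Sum.inl (α b) := by rw [ih]; exact hqn
            exact absurd (mem_image_of_mem α hbΔ) (hC2p n (α b) hp0 hp1)
          | inr v => cases u; cases v; rfl
    exact Subtype.ext (funext key)
  constructor
  · intro h
    have hU : IsOpen {p : Xtilde α Δ | (p : ℕ → X ⊕ Unit) 1 ≠ pdsZero X} := by
      have : {p : Xtilde α Δ | (p : ℕ → X ⊕ Unit) 1 ≠ pdsZero X} =
          (fun p : Xtilde α Δ => (p : ℕ → X ⊕ Unit) 1) ⁻¹' {pdsZero X}ᶜ := rfl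
      rw [this]
      exact (isClosed_singleton.isOpen_compl).preimage
        ((continuous_apply 1).comp continuous_subtype_val)
    have himg : Φ '' {p : Xtilde α Δ | (p : ℕ → X ⊕ Unit) 1 ≠ pdsZero X} = α '' Δ := by
      ext y
      constructor
      · rintro ⟨p, hp, rfl⟩
        obtain ⟨⟨x0, hx0⟩, hC1, hC2⟩ := mem_Xtilde_iff.mp p.2
        cases h1 : (p : ℕ → X ⊕ Unit) 1 with
        | inl x1 =>
          obtain ⟨hx1Δ, hp0⟩ := hC1 0 x1 h1
          rw [hΦval p x0 hx0]
          rw [hx0] at hp0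
          obtain rfl := Sum.inl.inj hp0
          exact mem_image_of_mem α hx1Δ
        | inr u => cases u; exact absurd h1 hp
      · rintro ⟨x, hxΔ, rfl⟩
        obtain ⟨p, hp⟩ := hsurj (α x)
        refine ⟨p, ?_, hp⟩
        obtain ⟨⟨x0, hx0⟩, hC1, hC2⟩ := mem_Xtilde_iff.mp p.2
        intro h1
        have hx0' : x0 = α x := by rw [hΦval p x0 hx0] at hp; exact hp
        exact hC2 0 x0 hx0 h1 (hx0' ▸ mem_image_of_mem α hxΔ)
    rw [← himg]
    exact h.isOpenMap _ hU
  · intro hopen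
    haveI : CompactSpace (Xtilde α Δ) :=
      isCompact_iff_compactSpace.mp ((isClosed_Xtilde hΔ.isClosed hα hopen).isCompact)
    exact isHomeomorph_iff_continuous_bijective.mpr ⟨hcont, hinjΦ, hsurj⟩
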